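/- arXiv:2510.06152 — 2 statements merged into one kernel-verified Lean document; each statement's English description precedes it below -/
import Mathlib

section
/- Let k be a perfect field of characteristic p > 0 and let G be a commutative affine group scheme of finite type over k. Then the first derived inverse limit R^1 lim of the inverse system ... → G → G → G, where each transition map is the relative Frobenius F_G : G → G, vanishes (as an fpqc abelian sheaf on k-algebras). -/
open TensorProduct

/-- A point of the Frobenius twist `G^{(p^{-n})}` of the affine group scheme `G = Spec A` over
`k` with values in the `k`-algebra `R`: a ring homomorphism `𝒪(G) → R` which is semilinear for
the `n`-th power of the Frobenius of `k` (for `n = 0` these are the usual `k`-points). -/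
def IsTwistedPoint (p : ℕ) (k : Type) [CommSemiring k] {A R : Type} [CommRing A] [CommRing R]
    [Algebra k A] [Algebra k R] (n : ℕ) (f : A →+* R) : Prop :=
  ∀ c : k, f (algebraMap k A (c ^ p ^ n)) = algebraMap k R c

set_option maxHeartbeats 1000000
set_option linter.unusedSectionVars false
set_option linter.unusedVariables false
set_option synthInstance.maxHeartbeats 400000

namespace S0

section DL

variable {R : Type} [CommRing R] {G : ℕ → Type}
variable [∀ n, AddCommGroup (G n)] [∀ n, Module R (G n)]
variable (f : ∀ i j : ℕ, i ≤ j → G i →ₗ[R] G j)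

lemma directedSystem_tensor [DirectedSystem G fun i j h => f i j h]
    (M : Type) [AddCommGroup M] [Module R M] :
    DirectedSystem (fun n => M ⊗[R] G n) fun i j h => LinearMap.lTensor M (f i j h) := by
  constructor
  · intro i x
    induction x using TensorProduct.induction_on with
    | zero => simp
    | tmul m g => simp [Module.DirectedSystem.map_self f g]
    | add a b ha hb => simp [ha, hb]
  · intro i j kk hij hjk x
    induction x using TensorProduct.induction_on with
    | zero => simp
    | tmul m g => simp [Module.DirectedSystem.map_map f hij hjk g]
    | add a b ha hb => simp [ha, hb]

lemma flat_directLimit [DirectedSystem G fun i j h => f i j h]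
    [∀ n, Module.Flat R (G n)] :
    Module.Flat R (Module.DirectLimit G f) := by
  rw [Module.Flat.iff_rTensor_injective']
  intro I
  haveI := directedSystem_tensor f (↥I)
  haveI := directedSystem_tensor f R
  rw [injective_iff_map_eq_zero]
  intro z hz
  set e1 := TensorProduct.directLimitRight f (↥I) with he1
  set e2 := TensorProduct.directLimitRight f R with he2
  obtain ⟨i, wi, hw⟩ := Module.DirectLimit.exists_of (e1 z)
  have key : ∀ (j : ℕ) (w : (↥I) ⊗[R] G j),
      e2 (LinearMap.rTensor (Module.DirectLimit G f) I.subtype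
          (e1.symm (Module.DirectLimit.of R ℕ _ _ j w)))
        = Module.DirectLimit.of R ℕ (fun n => R ⊗[R] G n)
            (fun i j h => LinearMap.lTensor R (f i j h)) j
            (LinearMap.rTensor (G j) I.subtype w) := by
    intro j w
    induction w using TensorProduct.induction_on with
    | zero => simp
    | tmul m g => simp [he1, he2]
    | add a b ha hb => simp only [map_add, ha, hb]
  have h0 : Module.DirectLimit.of R ℕ (fun n => R ⊗[R] G n)
      (fun i j h => LinearMap.lTensor R (f i j h)) i
      (LinearMap.rTensor (G i) I.subtype wi) = 0 := by
    rw [← key i wi, hw, LinearEquiv.symm_apply_apply, hz, map_zero]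
  obtain ⟨j, hij, hj⟩ := Module.DirectLimit.of.zero_exact h0
  have hj' : LinearMap.rTensor (G j) I.subtype (LinearMap.lTensor (↥I) (f i j hij) wi) = 0 := by
    have hcomm : (LinearMap.lTensor R (f i j hij)).comp (LinearMap.rTensor (G i) I.subtype)
        = (LinearMap.rTensor (G j) I.subtype).comp (LinearMap.lTensor (↥I) (f i j hij)) := by
      rw [LinearMap.lTensor_comp_rTensor, LinearMap.rTensor_comp_lTensor]
    calc LinearMap.rTensor (G j) I.subtype (LinearMap.lTensor (↥I) (f i j hij) wi)
        = ((LinearMap.rTensor (G j) I.subtype).comp (LinearMap.lTensor (↥I) (f i j hij))) wi := rfl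
      _ = ((LinearMap.lTensor R (f i j hij)).comp (LinearMap.rTensor (G i) I.subtype)) wi := by
          rw [hcomm]
      _ = 0 := hj
  have hinj : Function.Injective (LinearMap.rTensor (G j) I.subtype) :=
    (Module.Flat.iff_rTensor_injective' (R := R) (M := G j)).mp inferInstance I
  have hwi0 : LinearMap.lTensor (↥I) (f i j hij) wi = 0 := hinj (by simpa using hj')
  have : e1 z = 0 := by
    rw [← hw, ← Module.DirectLimit.of_f (f := fun i j h => LinearMap.lTensor (↥I) (f i j h))
      (hij := hij), hwi0, map_zero]
  simpa using congrArg e1.symm this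

end DL


section Construction

variable (p : ℕ) [Fact p.Prime] (k : Type) [Field k] [CharP k p] [PerfectRing k p]
  [ExpChar k p]
variable (A : Type) [CommRing A] [HopfAlgebra k A] [CharP A p] [ExpChar A p]
variable (R : Type) [CommRing R] [Algebra k R]
variable (N : ℕ)

/-- inverse of the `N`-th iterate of Frobenius on `k` -/
noncomputable def tau : k ≃+* k := (iterateFrobeniusEquiv k p N).symm

lemma tau_pow (c : k) : tau p k N c ^ p ^ N = c := by
  have := (iterateFrobeniusEquiv k p N).apply_symm_apply c
  rwa [iterateFrobeniusEquiv_def] at this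

lemma tau_of_pow (c : k) : tau p k N (c ^ p ^ N) = c := by
  have : c ^ p ^ N = iterateFrobeniusEquiv k p N c := rfl
  rw [this]; exact (iterateFrobeniusEquiv k p N).symm_apply_apply c

end Construction

/-- the `N`-th Frobenius twist of `A` (same ring, twisted `k`-algebra structure) -/
def Tw (p : ℕ) (A : Type) (_N : ℕ) : Type := A

section Construction

variable (p : ℕ) [Fact p.Prime] (k : Type) [Field k] [CharP k p] [PerfectRing k p]
  [ExpChar k p]
variable (A : Type) [CommRing A] [HopfAlgebra k A] [CharP A p] [ExpChar A p]
variable (R : Type) [CommRing R] [Algebra k R]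
variable (N : ℕ)

instance : CommRing (Tw p A N) := inferInstanceAs (CommRing A)

noncomputable instance : Algebra k (Tw p A N) :=
  ((algebraMap k A).comp (iterateFrobenius k p N)).toAlgebra

/-- identity, as a ring hom `A →+* Tw p A N` -/
def twHom : A →+* Tw p A N := RingHom.id A

/-- identity, as a ring hom `Tw p A N →+* A` -/
def twInv : Tw p A N →+* A := RingHom.id A

lemma algebraMap_Tw (c : k) :
    algebraMap k (Tw p A N) c = twHom p A N (algebraMap k A (c ^ p ^ N)) := rfl

end Construction

/-- the target of the twisted multiplication map: `R ⊗ Tw (N+1)` with `k`-module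
structure twisted by `tau N`. -/
def BTw (p : ℕ) (k A R : Type) [Field k] [CommRing A] [CommRing R] [HopfAlgebra k A]
    [Algebra k R] [Fact p.Prime] [CharP k p] [PerfectRing k p] [ExpChar k p]
    (N : ℕ) : Type :=
  R ⊗[k] Tw p A (N + 1)

section Construction

variable (p : ℕ) [Fact p.Prime] (k : Type) [Field k] [CharP k p] [PerfectRing k p]
  [ExpChar k p]
variable (A : Type) [CommRing A] [HopfAlgebra k A] [CharP A p] [ExpChar A p]
variable (R : Type) [CommRing R] [Algebra k R]
variable (N : ℕ)

noncomputable instance : AddCommGroup (BTw p k A R N) :=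
  inferInstanceAs (AddCommGroup (R ⊗[k] Tw p A (N + 1)))

noncomputable instance : Module k (BTw p k A R N) :=
  Module.compHom (R ⊗[k] Tw p A (N + 1)) (tau p k N).toRingHom

/-- identity map into `BTw` -/
def btw : (R ⊗[k] Tw p A (N + 1)) → BTw p k A R N := id

/-- identity map out of `BTw` -/
def unbtw : BTw p k A R N → (R ⊗[k] Tw p A (N + 1)) := id

lemma btw_add (a b : R ⊗[k] Tw p A (N + 1)) :
    btw p k A R N (a + b) = btw p k A R N a + btw p k A R N b := rfl

lemma btw_smul (c : k) (z : R ⊗[k] Tw p A (N + 1)) :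
    c • btw p k A R N z = btw p k A R N (tau p k N c • z) := rfl

variable (x : ∀ _ : ℕ, A →+* R)

lemma xN_algebraMap (hx : ∀ n, IsTwistedPoint p k n (x n)) (c : k) :
    x N (algebraMap k A c) = algebraMap k R (tau p k N c) := by
  conv_lhs => rw [← tau_pow p k N c]
  exact hx N (tau p k N c)

/-- the twisted-bilinear map `(u, v) ↦ x_N(u) ⊗ v^p` -/
noncomputable def mbil (hx : ∀ n, IsTwistedPoint p k n (x n)) :
    A →ₗ[k] A →ₗ[k] BTw p k A R N :=
  LinearMap.mk₂ k
    (fun u v => btw p k A R N (x N u ⊗ₜ[k] twHom p A (N + 1) (v ^ p)))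
    (fun u u' v => by
      rw [map_add, add_tmul, btw_add])
    (fun c u v => by
      rw [btw_smul, smul_tmul', Algebra.smul_def (tau p k N c) (x N u),
        ← xN_algebraMap p k A R N x hx, ← map_mul, ← Algebra.smul_def])
    (fun u v v' => by
      rw [add_pow_char, map_add, tmul_add, btw_add])
    (fun c u v => by
      rw [btw_smul, ← tmul_smul]
      have h : twHom p A (N+1) ((c • v) ^ p) = tau p k N c • twHom p A (N+1) (v ^ p) := by
        rw [Algebra.smul_def (tau p k N c), algebraMap_Tw, pow_succ, pow_mul, tau_pow,
          Algebra.smul_def c v, mul_pow, ← map_mul, map_pow]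
      rw [h])

lemma L_tmul (hx : ∀ n, IsTwistedPoint p k n (x n)) (u v : A) :
    unbtw p k A R N (TensorProduct.lift (mbil p k A R N x hx) (u ⊗ₜ[k] v))
      = x N u ⊗ₜ[k] twHom p A (N + 1) (v ^ p) := by
  rw [TensorProduct.lift.tmul]
  rfl

lemma L_add (hx : ∀ n, IsTwistedPoint p k n (x n)) (s t : A ⊗[k] A) :
    unbtw p k A R N (TensorProduct.lift (mbil p k A R N x hx) (s + t))
      = unbtw p k A R N (TensorProduct.lift (mbil p k A R N x hx) s)
        + unbtw p k A R N (TensorProduct.lift (mbil p k A R N x hx) t) := by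
  rw [map_add]; rfl

lemma L_mul (hx : ∀ n, IsTwistedPoint p k n (x n)) (s t : A ⊗[k] A) :
    unbtw p k A R N (TensorProduct.lift (mbil p k A R N x hx) (s * t))
      = unbtw p k A R N (TensorProduct.lift (mbil p k A R N x hx) s)
        * unbtw p k A R N (TensorProduct.lift (mbil p k A R N x hx) t) := by
  induction s using TensorProduct.induction_on with
  | zero =>
      rw [zero_mul, map_zero]
      show (0:R ⊗[k] Tw p A (N+1)) = unbtw p k A R N 0 * _
      show (0:R ⊗[k] Tw p A (N+1)) = 0 * _
      rw [zero_mul]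
  | add s1 s2 h1 h2 =>
      rw [add_mul, L_add, h1, h2, L_add, add_mul]
  | tmul u v =>
      induction t using TensorProduct.induction_on with
      | zero =>
          rw [mul_zero, map_zero]
          show (0:R ⊗[k] Tw p A (N+1)) = _ * unbtw p k A R N 0
          show (0:R ⊗[k] Tw p A (N+1)) = _ * 0
          rw [mul_zero]
      | add t1 t2 h1 h2 => rw [mul_add, L_add, h1, h2, L_add, mul_add]
      | tmul u' v' =>
          rw [Algebra.TensorProduct.tmul_mul_tmul, L_tmul, L_tmul, L_tmul,
            Algebra.TensorProduct.tmul_mul_tmul, ← map_mul, ← map_mul, mul_pow]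

end Construction
section Construction2

variable (p : ℕ) [Fact p.Prime] (k : Type) [Field k] [CharP k p] [PerfectRing k p]
  [ExpChar k p]
variable (A : Type) [CommRing A] [HopfAlgebra k A] [CharP A p] [ExpChar A p]
variable (R : Type) [CommRing R] [Algebra k R]
variable (N : ℕ)
variable (x : ∀ _ : ℕ, A →+* R) (hx : ∀ n, IsTwistedPoint p k n (x n))

/-- the Frobenius-translation transition, as a ring hom `A →+* R ⊗ Tw (N+1)` -/
noncomputable def psi : A →+* (R ⊗[k] Tw p A (N + 1)) where
  toFun a := unbtw p k A R N (TensorProduct.lift (mbil p k A R N x hx) (Coalgebra.comul a))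
  map_one' := by
    rw [Bialgebra.comul_one, Algebra.TensorProduct.one_def, L_tmul, map_one, one_pow, map_one,
      ← Algebra.TensorProduct.one_def]
  map_mul' a b := by
    rw [Bialgebra.comul_mul, L_mul]
  map_zero' := by
    rw [map_zero, map_zero]; rfl
  map_add' a b := by
    rw [map_add, L_add]

lemma psi_apply (a : A) :
    psi p k A R N x hx a
      = unbtw p k A R N (TensorProduct.lift (mbil p k A R N x hx) (Coalgebra.comul a)) := rfl

/-- `psi` as a `k`-algebra hom from the twist -/
noncomputable def psiAlg : Tw p A N →ₐ[k] (R ⊗[k] Tw p A (N + 1)) :=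
  { toRingHom := (psi p k A R N x hx).comp (twInv p A N)
    commutes' := fun c => by
      show psi p k A R N x hx (algebraMap k A (c ^ p ^ N)) = _
      rw [psi_apply, Bialgebra.comul_algebraMap, Algebra.TensorProduct.algebraMap_apply,
        L_tmul, one_pow, map_one, hx N c, Algebra.TensorProduct.algebraMap_apply] }

/-- left inclusion `R → R ⊗ Tw N` as a `k`-algebra hom -/
noncomputable def inclR : R →ₐ[k] (R ⊗[k] Tw p A N) := Algebra.TensorProduct.includeLeft

/-- the transition map of the tower, as a `k`-algebra hom -/
noncomputable def gAH : (R ⊗[k] Tw p A N) →ₐ[k] (R ⊗[k] Tw p A (N + 1)) :=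
  Algebra.TensorProduct.productMap (inclR p k A R (N + 1)) (psiAlg p k A R N x hx)

/-- the transition map of the tower, as a ring hom -/
noncomputable def g : (R ⊗[k] Tw p A N) →+* (R ⊗[k] Tw p A (N + 1)) :=
  (gAH p k A R N x hx).toRingHom

lemma g_tmul (r : R) (t : Tw p A N) :
    g p k A R N x hx (r ⊗ₜ[k] t)
      = (r ⊗ₜ[k] (1 : Tw p A (N + 1))) * psi p k A R N x hx (twInv p A N t) := by
  show Algebra.TensorProduct.productMap _ _ (r ⊗ₜ[k] t) = _
  rw [Algebra.TensorProduct.productMap_apply_tmul]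
  rfl

lemma g_algebraMapR (r : R) :
    g p k A R N x hx (algebraMap R (R ⊗[k] Tw p A N) r)
      = algebraMap R (R ⊗[k] Tw p A (N + 1)) r := by
  rw [Algebra.TensorProduct.algebraMap_apply, Algebra.TensorProduct.algebraMap_apply, g_tmul,
    map_one, map_one, mul_one]

lemma g_algebraMapk (c : k) :
    g p k A R N x hx (algebraMap k (R ⊗[k] Tw p A N) c)
      = algebraMap k (R ⊗[k] Tw p A (N + 1)) c :=
  (gAH p k A R N x hx).commutes c

/-- the chain of transition maps -/
noncomputable def ch : ∀ i j : ℕ, i ≤ j → (R ⊗[k] Tw p A i) →+* (R ⊗[k] Tw p A j) :=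
  fun i j h =>
    Nat.leRecOn h (fun {n} φ => (g p k A R n x hx).comp φ) (RingHom.id (R ⊗[k] Tw p A i))

lemma ch_self (i : ℕ) (h : i ≤ i) (z : R ⊗[k] Tw p A i) :
    ch p k A R x hx i i h z = z := by
  have : ch p k A R x hx i i h = RingHom.id (R ⊗[k] Tw p A i) := by
    unfold ch
    exact Nat.leRecOn_self _
  rw [this, RingHom.id_apply]

lemma ch_succ (i j : ℕ) (h : i ≤ j) (h' : i ≤ j + 1) (z : R ⊗[k] Tw p A i) :
    ch p k A R x hx i (j + 1) h' z = g p k A R j x hx (ch p k A R x hx i j h z) := by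
  have : ch p k A R x hx i (j + 1) h'
      = (g p k A R j x hx).comp (ch p k A R x hx i j h) := by
    unfold ch
    exact Nat.leRecOn_succ h _
  rw [this, RingHom.comp_apply]

lemma ch_trans (i j l : ℕ) (hij : i ≤ j) (hjl : j ≤ l) (z : R ⊗[k] Tw p A i) :
    ch p k A R x hx j l hjl (ch p k A R x hx i j hij z)
      = ch p k A R x hx i l (hij.trans hjl) z := by
  refine Nat.le_induction ?_ ?_ l hjl
  · rw [ch_self]
  · intro l hjl ih
    rw [ch_succ p k A R x hx j l hjl, ch_succ p k A R x hx i l (hij.trans hjl), ih]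

instance chDirected : DirectedSystem (fun n => R ⊗[k] Tw p A n)
    (fun i j h => ch p k A R x hx i j h) :=
  ⟨fun i z => ch_self p k A R x hx i le_rfl z,
   fun _ _ _ hij hjl z => ch_trans p k A R x hx _ _ _ hij hjl z⟩

lemma ch_algebraMapR (i j : ℕ) (h : i ≤ j) (r : R) :
    ch p k A R x hx i j h (algebraMap R _ r) = algebraMap R _ r := by
  induction j, h using Nat.le_induction with
  | base => rw [ch_self]
  | succ j hij ih => rw [ch_succ p k A R x hx i j hij, ih, g_algebraMapR]

lemma ch_algebraMapk (i j : ℕ) (h : i ≤ j) (c : k) :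
    ch p k A R x hx i j h (algebraMap k _ c) = algebraMap k _ c := by
  induction j, h using Nat.le_induction with
  | base => rw [ch_self]
  | succ j hij ih => rw [ch_succ p k A R x hx i j hij, ih, g_algebraMapk]

/-- the chain as `R`-linear maps -/
noncomputable def chL (i j : ℕ) (h : i ≤ j) :
    (R ⊗[k] Tw p A i) →ₗ[R] (R ⊗[k] Tw p A j) where
  toFun := ch p k A R x hx i j h
  map_add' := map_add _
  map_smul' r z := by
    simp only [RingHom.id_apply, Algebra.smul_def, map_mul, ch_algebraMapR]

instance chLDirected : DirectedSystem (fun n => R ⊗[k] Tw p A n)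
    (fun i j h => chL p k A R x hx i j h) :=
  ⟨fun i z => ch_self p k A R x hx i le_rfl z,
   fun _ _ _ hij hjl z => ch_trans p k A R x hx _ _ _ hij hjl z⟩

/-- `R`-linear retraction `R ⊗ Tw N → R` built from the counit -/
noncomputable def rhoAlg : (R ⊗[k] Tw p A N) →ₐ[k] R :=
  Algebra.TensorProduct.productMap (AlgHom.id k R)
    { toRingHom := ((algebraMap k R).comp ((tau p k N).toRingHom)).comp
        ((Bialgebra.counitAlgHom k A).toRingHom.comp (twInv p A N))
      commutes' := fun c => by
        show algebraMap k R (tau p k N (Bialgebra.counitAlgHom k A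
          (algebraMap k A (c ^ p ^ N)))) = algebraMap k R c
        rw [AlgHom.commutes]
        simp [tau_of_pow] }

lemma rhoAlg_algebraMapR (r : R) :
    rhoAlg p k A R N (algebraMap R (R ⊗[k] Tw p A N) r) = r := by
  rw [Algebra.TensorProduct.algebraMap_apply]
  show Algebra.TensorProduct.productMap _ _ ((algebraMap R R) r ⊗ₜ[k] (1 : Tw p A N)) = r
  rw [Algebra.TensorProduct.productMap_apply_tmul, map_one, mul_one]
  rfl

/-- the retraction as an `R`-linear map -/
noncomputable def rho : (R ⊗[k] Tw p A N) →ₗ[R] R where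
  toFun := rhoAlg p k A R N
  map_add' := map_add _
  map_smul' r z := by
    simp only [RingHom.id_apply, Algebra.smul_def r z, map_mul, rhoAlg_algebraMapR, smul_eq_mul]

end Construction2
section FF

lemma exists_fin_rep {k M N' : Type} [CommSemiring k] [AddCommMonoid M] [AddCommMonoid N']
    [Module k M] [Module k N'] (s : M ⊗[k] N') :
    ∃ (m : ℕ) (u : Fin m → M) (v : Fin m → N'), s = ∑ i, u i ⊗ₜ[k] v i := by
  induction s using TensorProduct.induction_on with
  | zero => exact ⟨0, ![], ![], by simp⟩
  | tmul a b => exact ⟨1, fun _ => a, fun _ => b, by simp⟩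
  | add s t hs ht =>
      obtain ⟨m1, u1, v1, h1⟩ := hs
      obtain ⟨m2, u2, v2, h2⟩ := ht
      refine ⟨m1 + m2, Fin.append u1 u2, Fin.append v1 v2, ?_⟩
      rw [Fin.sum_univ_add]
      simp only [Fin.append_left, Fin.append_right]
      rw [h1, h2]

variable {R : Type} [CommRing R] {G : ℕ → Type} [∀ n, CommRing (G n)]
  [∀ n, Algebra R (G n)] (f : ∀ i j : ℕ, i ≤ j → G i →+* G j)
  [DirectedSystem G fun i j h => f i j h]
  (fL : ∀ i j : ℕ, i ≤ j → G i →ₗ[R] G j)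
  [DirectedSystem G fun i j h => fL i j h]

theorem ff_directLimit
    (hfL : ∀ i j h z, fL i j h z = f i j h z)
    (halg : ∀ i j h r, f i j h (algebraMap R (G i) r) = algebraMap R (G j) r)
    [∀ n, Module.Flat R (G n)]
    (ρ : ∀ n, G n →ₗ[R] R) (hρ : ∀ n, ρ n 1 = 1) :
    letI : Algebra R (Ring.DirectLimit G fun i j h => f i j h) :=
      ((Ring.DirectLimit.of G (fun i j h => f i j h) 0).comp (algebraMap R (G 0))).toAlgebra
    Module.FaithfullyFlat R (Ring.DirectLimit G fun i j h => f i j h) := by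
  letI : Algebra R (Ring.DirectLimit G fun i j h => f i j h) :=
    ((Ring.DirectLimit.of G (fun i j h => f i j h) 0).comp (algebraMap R (G 0))).toAlgebra
  set DL := Ring.DirectLimit G fun i j h => f i j h with hDL
  have of_alg : ∀ (n : ℕ) (r : R),
      Ring.DirectLimit.of G (fun i j h => f i j h) n (algebraMap R (G n) r)
        = algebraMap R DL r := by
    intro n r
    induction n with
    | zero => rfl
    | succ n ih => rw [← halg n (n+1) (Nat.le_succ n) r, Ring.DirectLimit.of_f, ih]
  have of_smul : ∀ (n : ℕ) (r : R) (z : G n),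
      Ring.DirectLimit.of G (fun i j h => f i j h) n (r • z)
        = r • Ring.DirectLimit.of G (fun i j h => f i j h) n z := by
    intro n r z
    rw [Algebra.smul_def, Algebra.smul_def, map_mul, of_alg]
  let ofL : ∀ n, G n →ₗ[R] DL := fun n =>
    { toFun := Ring.DirectLimit.of G (fun i j h => f i j h) n
      map_add' := map_add _
      map_smul' := fun r z => of_smul n r z }
  let e : Module.DirectLimit G fL →ₗ[R] DL :=
    Module.DirectLimit.lift R ℕ G fL ofL (fun i j hij z => by
      show Ring.DirectLimit.of G (fun i j h => f i j h) j (fL i j hij z)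
        = Ring.DirectLimit.of G (fun i j h => f i j h) i z
      rw [hfL]
      exact Ring.DirectLimit.of_f hij z)
  have hsurj : Function.Surjective e := by
    intro z
    obtain ⟨i, w, rfl⟩ := Ring.DirectLimit.exists_of z
    exact ⟨Module.DirectLimit.of R ℕ G fL i w, Module.DirectLimit.lift_of _ _ _⟩
  have hinj : Function.Injective e := by
    rw [injective_iff_map_eq_zero]
    intro w hw
    obtain ⟨i, wi, rfl⟩ := Module.DirectLimit.exists_of w
    rw [Module.DirectLimit.lift_of] at hw
    obtain ⟨j, hij, hj⟩ := Ring.DirectLimit.of.zero_exact hw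
    rw [← Module.DirectLimit.of_f (hij := hij) (x := wi)]
    have : fL i j hij wi = 0 := by rw [hfL, hj]
    rw [this, map_zero]
  let eqv : Module.DirectLimit G fL ≃ₗ[R] DL := LinearEquiv.ofBijective e ⟨hinj, hsurj⟩
  haveI : Module.Flat R (Module.DirectLimit G fL) := flat_directLimit fL
  haveI flatDL : Module.Flat R DL := Module.Flat.of_linearEquiv eqv.symm
  refine { toFlat := flatDL, submodule_ne_top := ?_ }
  intro m hm htop
  have h1 : (1 : DL) ∈ m • (⊤ : Submodule R DL) := by
    rw [htop]; exact Submodule.mem_top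
  have key : ∃ (n : ℕ) (b : G n), Ring.DirectLimit.of G (fun i j h => f i j h) n b = 1
      ∧ b ∈ m • (⊤ : Submodule R (G n)) := by
    refine Submodule.smul_induction_on h1 ?_ ?_
    · intro r hr z _
      obtain ⟨n, b, rfl⟩ := Ring.DirectLimit.exists_of z
      exact ⟨n, r • b, of_smul n r b, Submodule.smul_mem_smul hr Submodule.mem_top⟩
    · rintro z1 z2 ⟨n1, b1, rfl, hb1⟩ ⟨n2, b2, rfl, hb2⟩
      refine ⟨max n1 n2, fL n1 (max n1 n2) (le_max_left _ _) b1
        + fL n2 (max n1 n2) (le_max_right _ _) b2, ?_, ?_⟩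
      · rw [map_add, hfL, hfL, Ring.DirectLimit.of_f, Ring.DirectLimit.of_f]
      · have m1 : fL n1 (max n1 n2) (le_max_left _ _) b1 ∈ m • (⊤ : Submodule R (G (max n1 n2))) := by
          have := Submodule.mem_map_of_mem (f := fL n1 (max n1 n2) (le_max_left _ _)) hb1
          rw [Submodule.map_smul''] at this
          exact Submodule.smul_mono le_rfl le_top this
        have m2 : fL n2 (max n1 n2) (le_max_right _ _) b2 ∈ m • (⊤ : Submodule R (G (max n1 n2))) := by
          have := Submodule.mem_map_of_mem (f := fL n2 (max n1 n2) (le_max_right _ _)) hb2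
          rw [Submodule.map_smul''] at this
          exact Submodule.smul_mono le_rfl le_top this
        exact Submodule.add_mem _ m1 m2
  obtain ⟨n, b, hb1, hb2⟩ := key
  have h0 : Ring.DirectLimit.of G (fun i j h => f i j h) n (b - 1) = 0 := by
    rw [map_sub, hb1, map_one, sub_self]
  obtain ⟨j, hij, hj⟩ := Ring.DirectLimit.of.zero_exact h0
  have hj1 : f n j hij b = 1 := by
    rw [map_sub, map_one, sub_eq_zero] at hj
    exact hj
  have hmem : (1 : G j) ∈ m • (⊤ : Submodule R (G j)) := by
    rw [← hj1, ← hfL]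
    have := Submodule.mem_map_of_mem (f := fL n j hij) hb2
    rw [Submodule.map_smul''] at this
    exact Submodule.smul_mono le_rfl le_top this
  have hR : (1 : R) ∈ m := by
    have h2 := Submodule.mem_map_of_mem (f := ρ j) hmem
    rw [Submodule.map_smul''] at h2
    rw [show ρ j 1 = 1 from hρ j] at h2
    have h4 : (1:R) ∈ m • (⊤ : Submodule R R) := Submodule.smul_mono le_rfl le_top h2
    rwa [Ideal.smul_eq_mul, Ideal.mul_top] at h4
  exact hm.ne_top ((Ideal.eq_top_iff_one m).mpr hR)

end FF
end S0
/-- Let `k` be a perfect field of characteristic `p > 0` and `G = Spec A` a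
commutative affine group scheme of finite type over `k` (`A` is a finite type commutative,
cocommutative Hopf algebra over `k`).  Then `R¹lim` of the Frobenius tower
`⋯ → G^{(1/p²)} → G^{(1/p)} → G` (each transition map the relative Frobenius) vanishes as an
fpqc abelian sheaf on `k`-algebras.  Concretely: the cokernel of `1 - F∘shift` on `∏ₙ G^{(1/pⁿ)}`
is locally trivial, i.e. for every `k`-algebra `R` and every family of points
`xₙ ∈ G^{(1/pⁿ)}(R)` there are a faithfully flat `R`-algebra `R'` and points
`yₙ ∈ G^{(1/pⁿ)}(R')` with `yₙ = xₙ ⋆ F(yₙ₊₁)` for all `n` (where `⋆` is the group law,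
written via a finite representation of the comultiplication, and `F` is the Frobenius
transition, acting on points by `y ↦ y ∘ (a ↦ a^p)`). -/
theorem statement0
    (p : ℕ) [Fact p.Prime] (k : Type) [Field k] [CharP k p] [PerfectRing k p]
    (A : Type) [CommRing A] [HopfAlgebra k A]
    (hft : Algebra.FiniteType k A)
    (hcomm : ∀ a : A, (TensorProduct.comm k A A) (Coalgebra.comul (R := k) a) =
      Coalgebra.comul (R := k) a) :
    ∀ (R : Type) (_ : CommRing R) (_ : Algebra k R)
      (x : ∀ _ : ℕ, A →+* R), (∀ n, IsTwistedPoint p k n (x n)) →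
      ∃ (R' : Type) (_ : CommRing R') (_ : Algebra k R') (_ : Algebra R R')
        (_ : IsScalarTower k R R') (_ : Module.FaithfullyFlat R R')
        (y : ∀ _ : ℕ, A →+* R'),
        (∀ n, IsTwistedPoint p k n (y n)) ∧
        ∀ (n : ℕ) (a : A), ∃ (m : ℕ) (u v : Fin m → A),
          Coalgebra.comul (R := k) a = ∑ i, u i ⊗ₜ[k] v i ∧
          y n a = ∑ i, algebraMap R R' (x n (u i)) * (y (n + 1) (v i)) ^ p := by
  intro R cR aR x hx
  letI := cR
  letI := aR
  haveI : ExpChar k p := .prime Fact.out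
  haveI : Nontrivial A := (Bialgebra.counitAlgHom k A).toRingHom.domain_nontrivial
  haveI : CharP A p := charP_of_injective_algebraMap (algebraMap k A).injective p
  haveI : ExpChar A p := .prime Fact.out
  set DL := Ring.DirectLimit (fun N => R ⊗[k] S0.Tw p A N)
    (fun i j h => S0.ch p k A R x hx i j h) with hDLdef
  letI algR' : Algebra R DL :=
    ((Ring.DirectLimit.of (fun N => R ⊗[k] S0.Tw p A N)
      (fun i j h => S0.ch p k A R x hx i j h) 0).comp
      (algebraMap R (R ⊗[k] S0.Tw p A 0))).toAlgebra
  letI algk' : Algebra k DL :=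
    ((Ring.DirectLimit.of (fun N => R ⊗[k] S0.Tw p A N)
      (fun i j h => S0.ch p k A R x hx i j h) 0).comp
      (algebraMap k (R ⊗[k] S0.Tw p A 0))).toAlgebra
  have halgtw : ∀ c : k, algebraMap k (R ⊗[k] S0.Tw p A 0) c
      = algebraMap R (R ⊗[k] S0.Tw p A 0) (algebraMap k R c) := by
    intro c
    rw [Algebra.TensorProduct.algebraMap_apply, Algebra.TensorProduct.algebraMap_apply,
      Algebra.algebraMap_self, RingHom.id_apply]
  haveI tower : IsScalarTower k R DL := IsScalarTower.of_algebraMap_eq (fun c => by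
    show (Ring.DirectLimit.of (fun N => R ⊗[k] S0.Tw p A N)
        (fun i j h => S0.ch p k A R x hx i j h) 0) (algebraMap k (R ⊗[k] S0.Tw p A 0) c) = _
    rw [halgtw c]
    rfl)
  haveI flatG : ∀ n, Module.Flat R (R ⊗[k] S0.Tw p A n) := fun n => inferInstance
  haveI := S0.chDirected p k A R x hx
  haveI := S0.chLDirected p k A R x hx
  haveI ff : Module.FaithfullyFlat R DL :=
    S0.ff_directLimit (S0.ch p k A R x hx) (S0.chL p k A R x hx)
      (fun _ _ _ _ => rfl) (S0.ch_algebraMapR p k A R x hx)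
      (fun n => S0.rho p k A R n) (fun n => map_one (S0.rhoAlg p k A R n))
  let y : ∀ _ : ℕ, A →+* DL := fun n =>
    (Ring.DirectLimit.of (fun N => R ⊗[k] S0.Tw p A N)
      (fun i j h => S0.ch p k A R x hx i j h) n).comp
      (((Algebra.TensorProduct.includeRight :
          S0.Tw p A n →ₐ[k] R ⊗[k] S0.Tw p A n).toRingHom).comp (S0.twHom p A n))
  have ofalgk : ∀ (n : ℕ) (c : k),
      Ring.DirectLimit.of (fun N => R ⊗[k] S0.Tw p A N)
        (fun i j h => S0.ch p k A R x hx i j h) n (algebraMap k (R ⊗[k] S0.Tw p A n) c)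
      = algebraMap k DL c := by
    intro n c
    induction n with
    | zero => rfl
    | succ n ih =>
        rw [← S0.ch_algebraMapk p k A R x hx n (n+1) (Nat.le_succ n) c,
          Ring.DirectLimit.of_f, ih]
  have ofalgR : ∀ (n : ℕ) (r : R),
      Ring.DirectLimit.of (fun N => R ⊗[k] S0.Tw p A N)
        (fun i j h => S0.ch p k A R x hx i j h) n (algebraMap R (R ⊗[k] S0.Tw p A n) r)
      = algebraMap R DL r := by
    intro n r
    induction n with
    | zero => rfl
    | succ n ih =>
        rw [← S0.ch_algebraMapR p k A R x hx n (n+1) (Nat.le_succ n) r,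
          Ring.DirectLimit.of_f, ih]
  have hyt : ∀ n, IsTwistedPoint p k n (y n) := by
    intro n c
    show Ring.DirectLimit.of (fun N => R ⊗[k] S0.Tw p A N)
        (fun i j h => S0.ch p k A R x hx i j h) n
        ((Algebra.TensorProduct.includeRight :
          S0.Tw p A n →ₐ[k] R ⊗[k] S0.Tw p A n)
          (S0.twHom p A n (algebraMap k A (c ^ p ^ n)))) = algebraMap k DL c
    rw [show S0.twHom p A n (algebraMap k A (c ^ p ^ n))
        = algebraMap k (S0.Tw p A n) c from rfl]
    rw [(Algebra.TensorProduct.includeRight :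
        S0.Tw p A n →ₐ[k] R ⊗[k] S0.Tw p A n).commutes c]
    exact ofalgk n c
  refine ⟨DL, inferInstance, algk', algR', tower, ff, y, hyt, ?_⟩
  intro n a
  obtain ⟨mm, u, v, hrep⟩ := S0.exists_fin_rep (Coalgebra.comul (R := k) a)
  refine ⟨mm, u, v, hrep, ?_⟩
  have hy : y n a = Ring.DirectLimit.of (fun N => R ⊗[k] S0.Tw p A N)
      (fun i j h => S0.ch p k A R x hx i j h) n ((1:R) ⊗ₜ[k] S0.twHom p A n a) := rfl
  have h2 : S0.ch p k A R x hx n (n+1) (Nat.le_succ n) ((1:R) ⊗ₜ[k] S0.twHom p A n a)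
      = S0.g p k A R n x hx ((1:R) ⊗ₜ[k] S0.twHom p A n a) := by
    rw [S0.ch_succ p k A R x hx n n le_rfl, S0.ch_self]
  have step1 : y n a = Ring.DirectLimit.of (fun N => R ⊗[k] S0.Tw p A N)
      (fun i j h => S0.ch p k A R x hx i j h) (n+1)
      (S0.g p k A R n x hx ((1:R) ⊗ₜ[k] S0.twHom p A n a)) := by
    rw [hy, ← h2, Ring.DirectLimit.of_f]
  have step2 : S0.g p k A R n x hx ((1:R) ⊗ₜ[k] S0.twHom p A n a)
      = S0.psi p k A R n x hx a := by
    rw [S0.g_tmul]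
    rw [show S0.twInv p A n (S0.twHom p A n a) = a from rfl]
    rw [show ((1:R) ⊗ₜ[k] (1 : S0.Tw p A (n+1))) = (1 : R ⊗[k] S0.Tw p A (n+1)) from
      (Algebra.TensorProduct.one_def).symm, one_mul]
  let LAdd : (A ⊗[k] A) →+ (R ⊗[k] S0.Tw p A (n+1)) :=
    AddMonoidHom.mk' (fun s => S0.unbtw p k A R n
      (TensorProduct.lift (S0.mbil p k A R n x hx) s))
      (fun s t => S0.L_add p k A R n x hx s t)
  have step3 : S0.psi p k A R n x hx a
      = ∑ i, (x n (u i)) ⊗ₜ[k] S0.twHom p A (n+1) ((v i) ^ p) := by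
    rw [S0.psi_apply]
    rw [show S0.unbtw p k A R n (TensorProduct.lift (S0.mbil p k A R n x hx)
      (Coalgebra.comul a)) = LAdd (Coalgebra.comul a) from rfl]
    rw [hrep, map_sum]
    refine Finset.sum_congr rfl (fun i _ => ?_)
    exact S0.L_tmul p k A R n x hx (u i) (v i)
  have step4 : ∀ i : Fin mm, (x n (u i)) ⊗ₜ[k] S0.twHom p A (n+1) ((v i) ^ p)
      = algebraMap R (R ⊗[k] S0.Tw p A (n+1)) (x n (u i))
        * ((1:R) ⊗ₜ[k] S0.twHom p A (n+1) ((v i) ^ p)) := by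
    intro i
    rw [Algebra.TensorProduct.algebraMap_apply, Algebra.algebraMap_self, RingHom.id_apply,
      Algebra.TensorProduct.tmul_mul_tmul, mul_one, one_mul]
  rw [step1, step2, step3, map_sum]
  refine Finset.sum_congr rfl (fun i _ => ?_)
  rw [step4 i, map_mul, ofalgR (n+1) (x n (u i))]
  congr 1
  have hpow : (1:R) ⊗ₜ[k] S0.twHom p A (n+1) ((v i) ^ p)
      = (((1:R) ⊗ₜ[k] S0.twHom p A (n+1) (v i)) : R ⊗[k] S0.Tw p A (n+1)) ^ p := by
    rw [show S0.twHom p A (n+1) ((v i) ^ p) = (S0.twHom p A (n+1) (v i)) ^ p from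
      map_pow _ _ _]
    rw [Algebra.TensorProduct.tmul_pow, one_pow]
  rw [hpow, map_pow]
  rfl
end

section
/- Let k be a field of characteristic p > 0 and let B be a perfect derived k-algebra, i.e., a coconnective derived commutative k-algebra on which the derived Frobenius endomorphism is an isomorphism. Then B is coconnective; more precisely, for any derived F_p-algebra B, the Frobenius endomorphism induces the zero map on π_i(B) for all i > 0, so if Frobenius is an isomorphism then π_i(B) = 0 for all i > 0. -/
open CategoryTheory AlgebraicTopology

/-- The underlying simplicial abelian group of a simplicial commutative ring. -/
noncomputable abbrev simplicialAb (B : SimplicialObject CommRingCat.{0}) :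
    SimplicialObject AddCommGrpCat.{0} :=
  ((SimplicialObject.whiskering _ _).obj
    (forget₂ CommRingCat RingCat ⋙ forget₂ RingCat AddCommGrpCat)).obj B

/-- The Frobenius endomorphism `x ↦ x^p` of a simplicial commutative `𝔽_p`-algebra, as an
endomorphism of the underlying simplicial abelian group. -/
noncomputable def frobNat (p : ℕ) [Fact p.Prime] (B : SimplicialObject CommRingCat.{0})
    (hchar : ∀ X : SimplexCategoryᵒᵖ, CharP (B.obj X) p) :
    simplicialAb B ⟶ simplicialAb B where
  app X := by
    haveI := hchar X
    exact AddCommGrpCat.ofHom (frobenius (B.obj X) p).toAddMonoidHom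
  naturality X Y f := by
    haveI := hchar X
    haveI := hchar Y
    refine AddCommGrpCat.ext fun (x : B.obj X) => ?_
    exact (map_pow (B.map f).hom x p).symm

namespace Statement15Aux

open CategoryTheory.Limits CategoryTheory.Subobject Opposite

lemma rapp {R S : CommRingCat.{0}} {f g : R ⟶ S} (h : f = g) (x : R) : f x = g x := by rw [h]

lemma gapp {R S : AddCommGrpCat.{0}} {f g : R ⟶ S} (h : f = g) (x : R) : f x = g x := by rw [h]

lemma rcomp_apply {X Y Z : CommRingCat.{0}} (f : X ⟶ Y) (g : Y ⟶ Z) (x : X) :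
    (f ≫ g) x = g (f x) := rfl

lemma gcomp_apply {X Y Z : AddCommGrpCat.{0}} (f : X ⟶ Y) (g : Y ⟶ Z) (x : X) :
    (f ≫ g) x = g (f x) := rfl

lemma objD_arrow (X : SimplicialObject AddCommGrpCat.{0}) (n : ℕ) :
    NormalizedMooreComplex.objD X n ≫ (NormalizedMooreComplex.objX X n).arrow
      = (NormalizedMooreComplex.objX X (n+1)).arrow ≫ X.δ 0 := by
  cases n
  · simp [NormalizedMooreComplex.objD]
  · simp [NormalizedMooreComplex.objD]

lemma objX_arrow_δ (X : SimplicialObject AddCommGrpCat.{0}) (n : ℕ) (k : Fin (n+1)) :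
    (NormalizedMooreComplex.objX X (n+1)).arrow ≫ X.δ k.succ = 0 := by
  rw [NormalizedMooreComplex.objX_add_one, ← factorThru_arrow _ _ (finset_inf_arrow_factors
    Finset.univ (fun k : Fin (n+1) => kernelSubobject (X.δ k.succ)) k (Finset.mem_univ _)),
    Category.assoc, kernelSubobject_arrow_comp, comp_zero]

/-- Any element all of whose "inner" faces vanish lifts to the normalized Moore complex. -/
lemma exists_normalized (X : SimplicialObject AddCommGrpCat.{0}) (n : ℕ)
    (v : X.obj (op (SimplexCategory.mk (n+2)))) (hv : ∀ k : Fin (n+2), X.δ k.succ v = 0) :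
    ∃ y : ((NormalizedMooreComplex.objX X (n+2)) : AddCommGrpCat.{0}),
      (NormalizedMooreComplex.objX X (n+2)).arrow y = v := by
  set f : AddCommGrpCat.of ℤ ⟶ X.obj (op (SimplexCategory.mk (n+2))) :=
    AddCommGrpCat.ofHom (zmultiplesHom _ v) with hfdef
  have hf1 : f (1 : ℤ) = v := one_zsmul _
  have hf : (NormalizedMooreComplex.objX X (n+2)).Factors f := by
    rw [NormalizedMooreComplex.objX_add_one]
    refine (finset_inf_factors _).mpr fun k _ => kernelSubobject_factors _ _ ?_
    refine AddCommGrpCat.hom_ext (AddMonoidHom.ext_int ?_)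
    show (f ≫ X.δ k.succ) (1 : ℤ) = (0 : AddCommGrpCat.of ℤ ⟶ _) (1 : ℤ)
    rw [gcomp_apply, hf1]
    exact (hv k).trans rfl
  refine ⟨Subobject.factorThru _ f hf (1 : ℤ), ?_⟩
  rw [← gcomp_apply, Subobject.factorThru_arrow]
  exact hf1

variable (B : SimplicialObject CommRingCat.{0})

/-- The explicit bounding element for the `p`-th power of a normalized cycle. -/
noncomputable def w (p n : ℕ) (a : B.obj (op (SimplexCategory.mk (n+1)))) :
    B.obj (op (SimplexCategory.mk (n+2))) :=
  (B.σ 0 a)^p - (B.σ 0 a)^(p-1) * (B.σ 1 a)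

lemma δ_zero_w (p : ℕ) (n : ℕ) (a : B.obj (op (SimplexCategory.mk (n+1))))
    (ha : ∀ i : Fin (n+2), B.δ i a = 0) :
    B.δ (0 : Fin (n+3)) (w B p n a) = a ^ p := by
  have e1 : B.σ (0 : Fin (n+2)) ≫ B.δ (0 : Fin (n+3)) = 𝟙 _ :=
    B.δ_comp_σ_self' (by simp)
  have e2 : B.σ (1 : Fin (n+2)) ≫ B.δ (0 : Fin (n+3))
      = B.δ (0 : Fin (n+2)) ≫ B.σ (0 : Fin (n+1)) := by
    have h := B.δ_comp_σ_of_le (i := (0 : Fin (n+2))) (j := (0 : Fin (n+1))) (by simp)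
    simpa using h
  have h1 : B.δ (0 : Fin (n+3)) (B.σ (0 : Fin (n+2)) a) = a := by
    have := rapp e1 a
    rw [rcomp_apply] at this
    simpa using this
  have h2 : B.δ (0 : Fin (n+3)) (B.σ (1 : Fin (n+2)) a) = 0 := by
    have := rapp e2 a
    rw [rcomp_apply, rcomp_apply] at this
    rw [this, ha, map_zero]
  simp [w, map_sub, map_mul, map_pow, h1, h2]

lemma δ_succ_w (p : ℕ) (hp : 2 ≤ p) (n : ℕ) (a : B.obj (op (SimplexCategory.mk (n+1))))
    (ha : ∀ i : Fin (n+2), B.δ i a = 0) (k : Fin (n+2)) :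
    B.δ k.succ (w B p n a) = 0 := by
  rcases eq_or_ne k 0 with rfl | hk
  · -- δ₁ w = aᵖ - aᵖ⁻¹ * a = 0
    have e3 : B.σ (0 : Fin (n+2)) ≫ B.δ ((0 : Fin (n+2)).succ) = 𝟙 _ :=
      B.δ_comp_σ_succ
    have e4 : B.σ (1 : Fin (n+2)) ≫ B.δ ((0 : Fin (n+2)).succ) = 𝟙 _ :=
      B.δ_comp_σ_self' (by ext; simp)
    have h3 : B.δ ((0 : Fin (n+2)).succ) (B.σ (0 : Fin (n+2)) a) = a := by
      have := rapp e3 a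
      rw [rcomp_apply] at this
      simpa using this
    have h4 : B.δ ((0 : Fin (n+2)).succ) (B.σ (1 : Fin (n+2)) a) = a := by
      have := rapp e4 a
      rw [rcomp_apply] at this
      simpa using this
    simp only [w, map_sub, map_mul, map_pow, h3, h4]
    rw [← pow_succ, Nat.sub_add_cancel (by omega), sub_self]
  · -- k > 0 : both terms contain a factor `δ k.succ (σ 0 a) = σ 0 (δ k a) = 0`
    have hk' : Fin.castSucc (0 : Fin (n+1)) < k := by
      simpa using Fin.pos_of_ne_zero hk
    have e5 : B.σ (0 : Fin (n+2)) ≫ B.δ k.succ = B.δ k ≫ B.σ (0 : Fin (n+1)) := by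
      have h := B.δ_comp_σ_of_gt (i := k) (j := (0 : Fin (n+1))) hk'
      simpa using h
    have h5 : B.δ k.succ (B.σ (0 : Fin (n+2)) a) = 0 := by
      have := rapp e5 a
      rw [rcomp_apply, rcomp_apply] at this
      rw [this, ha, map_zero]
    simp only [w, map_sub, map_mul, map_pow, h5]
    rw [zero_pow (by omega), zero_pow (by omega : p - 1 ≠ 0), zero_mul, sub_zero]

end Statement15Aux

open CategoryTheory.Limits CategoryTheory.Subobject Opposite in
/-- Chain-level statement: if `x` is a normalized `(n+1)`-cycle, then its image under the
Frobenius chain map is a boundary in the normalized Moore complex. -/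
lemma Statement15Aux.key_elt (p : ℕ) (hp2 : 2 ≤ p) [Fact p.Prime]
    (B : SimplicialObject CommRingCat.{0})
    (hchar : ∀ X : SimplexCategoryᵒᵖ, CharP (B.obj X) p) (n : ℕ)
    (x : ((NormalizedMooreComplex.objX (simplicialAb B) (n+1)) : AddCommGrpCat.{0}))
    (hdx : NormalizedMooreComplex.objD (simplicialAb B) n x = 0) :
    ∃ y : ((NormalizedMooreComplex.objX (simplicialAb B) (n+2)) : AddCommGrpCat.{0}),
      NormalizedMooreComplex.objD (simplicialAb B) (n+1) y
        = (NormalizedMooreComplex.map (frobNat p B hchar)).f (n+1) x := by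
  -- the underlying element of `B _[n+1]`
  set a : B.obj (op (SimplexCategory.mk (n+1))) :=
    (NormalizedMooreComplex.objX (simplicialAb B) (n+1)).arrow x with ha
  -- all faces of `a` vanish
  have hδa : ∀ i : Fin (n+2), B.δ i a = 0 := by
    intro i
    rcases Fin.eq_zero_or_eq_succ i with rfl | ⟨j, rfl⟩
    · have h := gapp (objD_arrow (simplicialAb B) n) x
      rw [gcomp_apply, gcomp_apply] at h
      have h2 : (NormalizedMooreComplex.objX (simplicialAb B) n).arrow
          (NormalizedMooreComplex.objD (simplicialAb B) n x) = 0 :=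
        (congrArg (⇑((NormalizedMooreComplex.objX (simplicialAb B) n).arrow)) hdx).trans
          (map_zero _)
      exact (h2.symm.trans h).symm
    · have h := gapp (objX_arrow_δ (simplicialAb B) n j) x
      rw [gcomp_apply] at h
      exact h.trans rfl
  -- the bounding element, lifted to the normalized Moore complex
  obtain ⟨y, hy⟩ := exists_normalized (simplicialAb B) n (Statement15Aux.w B p n a)
    (fun k => δ_succ_w B p hp2 n a hδa k)
  refine ⟨y, ?_⟩
  -- compare after applying the (monic) arrow of the subobject
  apply (AddCommGrpCat.mono_iff_injective
    ((NormalizedMooreComplex.objX (simplicialAb B) (n+1)).arrow)).1 inferInstance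
  have harrow : (NormalizedMooreComplex.map (frobNat p B hchar)).f (n+1)
        ≫ (NormalizedMooreComplex.objX (simplicialAb B) (n+1)).arrow
      = (NormalizedMooreComplex.objX (simplicialAb B) (n+1)).arrow
          ≫ (frobNat p B hchar).app (op (SimplexCategory.mk (n+1))) := by
    rw [NormalizedMooreComplex.map_f]
    exact factorThru_arrow _ _ _
  have hL : (NormalizedMooreComplex.objX (simplicialAb B) (n+1)).arrow
      (NormalizedMooreComplex.objD (simplicialAb B) (n+1) y) = a ^ p := by
    have h := gapp (objD_arrow (simplicialAb B) (n+1)) y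
    rw [gcomp_apply, gcomp_apply] at h
    refine h.trans ?_
    have h2 : (simplicialAb B).δ (0 : Fin (n+3))
          ((NormalizedMooreComplex.objX (simplicialAb B) (n+2)).arrow y)
        = (simplicialAb B).δ (0 : Fin (n+3))
            (show (simplicialAb B).obj _ from Statement15Aux.w B p n a) :=
      congrArg _ hy
    exact h2.trans (δ_zero_w B p n a hδa)
  have hR : (NormalizedMooreComplex.objX (simplicialAb B) (n+1)).arrow
      ((NormalizedMooreComplex.map (frobNat p B hchar)).f (n+1) x) = a ^ p := by
    have h := gapp harrow x
    exact h.trans rfl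
  exact hL.trans hR.symm

open Statement15Aux CategoryTheory.Limits CategoryTheory.Subobject Opposite in
theorem statement15_key (p : ℕ) [Fact p.Prime] (B : SimplicialObject CommRingCat.{0})
    (hchar : ∀ X : SimplexCategoryᵒᵖ, CharP (B.obj X) p) (n : ℕ) :
    HomologicalComplex.cyclesMap
        ((normalizedMooreComplex AddCommGrpCat).map (frobNat p B hchar)) (n+1) ≫
      (((normalizedMooreComplex AddCommGrpCat).obj (simplicialAb B)).homologyπ (n+1)) = 0 := by
  have hp2 : 2 ≤ p := (Fact.out : p.Prime).two_le
  ext ξ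
  rw [gcomp_apply]
  -- the underlying cycle
  have hdx : NormalizedMooreComplex.objD (simplicialAb B) n
      (((normalizedMooreComplex AddCommGrpCat).obj (simplicialAb B)).iCycles (n+1) ξ) = 0 := by
    have h := gapp (((normalizedMooreComplex AddCommGrpCat).obj
      (simplicialAb B)).iCycles_d (n+1) n) ξ
    rw [gcomp_apply] at h
    have h2 := gapp (normalizedMooreComplex_objD (simplicialAb B) n).symm
      (((normalizedMooreComplex AddCommGrpCat).obj (simplicialAb B)).iCycles (n+1) ξ)
    exact h2.trans (h.trans rfl)
  obtain ⟨y, hy⟩ := Statement15Aux.key_elt p hp2 B hchar n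
    (((normalizedMooreComplex AddCommGrpCat).obj (simplicialAb B)).iCycles (n+1) ξ) hdx
  have key : HomologicalComplex.cyclesMap
        ((normalizedMooreComplex AddCommGrpCat).map (frobNat p B hchar)) (n+1) ξ
      = ((normalizedMooreComplex AddCommGrpCat).obj (simplicialAb B)).toCycles (n+2) (n+1) y := by
    apply (AddCommGrpCat.mono_iff_injective
      (((normalizedMooreComplex AddCommGrpCat).obj (simplicialAb B)).iCycles (n+1))).1
      inferInstance
    have s1 := gapp (HomologicalComplex.cyclesMap_i
      ((normalizedMooreComplex AddCommGrpCat).map (frobNat p B hchar)) (n+1)) ξ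
    rw [gcomp_apply, gcomp_apply] at s1
    have s2 := gapp (((normalizedMooreComplex AddCommGrpCat).obj
      (simplicialAb B)).toCycles_i (n+2) (n+1)) y
    have s3 := gapp (normalizedMooreComplex_objD (simplicialAb B) (n+1)) y
    refine s1.trans ?_
    refine Eq.trans ?_ s2.symm
    exact (hy.symm.trans s3.symm).symm.symm
  rw [key]
  have s4 := gapp (((normalizedMooreComplex AddCommGrpCat).obj
    (simplicialAb B)).toCycles_comp_homologyπ (n+2) (n+1)) y
  exact s4.trans rfl

/-- (Perfect derived rings are coconnective.)  Let `p` be a prime and let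
`B` be a derived (here: simplicial) commutative `𝔽_p`-algebra.  Then the Frobenius
endomorphism of `B` induces the zero map on the homotopy groups `π_i(B)` (the homology of the
normalized Moore complex) for all `i > 0`.  Consequently, if the Frobenius of `B` is an
isomorphism (i.e. `B` is perfect), then `π_i(B) = 0` for all `i > 0`, so `B` is
coconnective (discrete in the connective direction). -/
theorem statement15 (p : ℕ) [Fact p.Prime] (B : SimplicialObject CommRingCat.{0})
    (hchar : ∀ X : SimplexCategoryᵒᵖ, CharP (B.obj X) p) :
    (∀ i : ℕ, 0 < i →
      HomologicalComplex.homologyMap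
        ((normalizedMooreComplex AddCommGrpCat).map (frobNat p B hchar)) i = 0) ∧
    ((∀ X : SimplexCategoryᵒᵖ, Function.Bijective (fun x : (B.obj X) => x ^ p)) →
      ∀ i : ℕ, 0 < i →
        Limits.IsZero
          (((normalizedMooreComplex AddCommGrpCat).obj (simplicialAb B)).homology i)) := by
  have part1 : ∀ i : ℕ, 0 < i →
      HomologicalComplex.homologyMap
        ((normalizedMooreComplex AddCommGrpCat).map (frobNat p B hchar)) i = 0 := by
    intro i hi
    obtain ⟨n, rfl⟩ : ∃ n, i = n + 1 := ⟨i - 1, by omega⟩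
    rw [← cancel_epi
      ((((normalizedMooreComplex AddCommGrpCat).obj (simplicialAb B))).homologyπ (n+1)),
      HomologicalComplex.homologyπ_naturality, CategoryTheory.Limits.comp_zero]
    exact statement15_key p B hchar n
  refine ⟨part1, fun hbij i hi => ?_⟩
  haveI : IsIso (frobNat p B hchar) := by
    haveI : ∀ X : SimplexCategoryᵒᵖ, IsIso ((frobNat p B hchar).app X) := by
      intro X
      haveI := hchar X
      have hb : Function.Bijective ((frobNat p B hchar).app X) := hbij X
      haveI : IsIso ((forget AddCommGrpCat).map ((frobNat p B hchar).app X)) :=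
        (CategoryTheory.isIso_iff_bijective _).2 hb
      exact isIso_of_reflects_iso _ (forget AddCommGrpCat)
    exact NatIso.isIso_of_isIso_app _
  haveI : IsIso (HomologicalComplex.homologyMap
      ((normalizedMooreComplex AddCommGrpCat).map (frobNat p B hchar)) i) := by
    change IsIso ((HomologicalComplex.homologyFunctor AddCommGrpCat _ i).map _)
    infer_instance
  exact Limits.IsZero.of_epi_eq_zero _ (part1 i hi)
end
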